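/- Let D be an equireplicate design with n blocks of size k on n symbols (each symbol in exactly k blocks) such that every pair of distinct blocks intersects in either λ₁ = ⌊k(k−1)/(n−1)⌋ or λ₂ = λ₁+1 symbols, with (n−1) ∤ k(k−1), and such that every block meets exactly n₁ = λ₂(n−1) − k(k−1) other blocks in λ₁ symbols. Then every pair of distinct symbols is covered by either λ₁ or λ₂ blocks. -/
import Mathlib


open Finset

/-- Auxiliary: product of two consecutive integers is nonnegative. -/
lemma consec_mul_nonneg (x : ℤ) : 0 ≤ x * (x - 1) := by
  rcases le_or_gt x 0 with h | h
  · nlinarith [mul_self_nonneg x]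
  · have h1 : 1 ≤ x := h
    exact mul_nonneg (by linarith) (by linarith)

/-- Auxiliary: swapping two pairs of summation indices. -/
lemma sum_swap4 {α : Type*} [Fintype α] (F : α → α → α → α → ℤ) :
    (∑ s : α, ∑ t : α, ∑ i : α, ∑ j : α, F s t i j)
      = ∑ i : α, ∑ j : α, ∑ s : α, ∑ t : α, F s t i j := by
  calc (∑ s : α, ∑ t : α, ∑ i : α, ∑ j : α, F s t i j)
      = ∑ s : α, ∑ i : α, ∑ t : α, ∑ j : α, F s t i j :=
        Finset.sum_congr rfl fun s _ => Finset.sum_comm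
    _ = ∑ s : α, ∑ i : α, ∑ j : α, ∑ t : α, F s t i j :=
        Finset.sum_congr rfl fun s _ => Finset.sum_congr rfl fun i _ => Finset.sum_comm
    _ = ∑ i : α, ∑ s : α, ∑ j : α, ∑ t : α, F s t i j := Finset.sum_comm
    _ = ∑ i : α, ∑ j : α, ∑ s : α, ∑ t : α, F s t i j :=
        Finset.sum_congr rfl fun i _ => Finset.sum_comm

set_option maxHeartbeats 2000000 in
/-- The dual theorem for near Youden rectangles (Theorem 5): an equireplicate
symmetric design whose blocks pairwise intersect in `λ₁` or `λ₂ = λ₁+1`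
symbols, with each block meeting exactly `λ₂(n-1) - k(k-1)` other blocks in
`λ₁` symbols, has every pair of distinct symbols covered by `λ₁` or `λ₂`
blocks. -/
theorem near_youden_dual (n k lam1 : ℕ) (hn : 1 < n) (hk : 0 < k)
    (hlam1 : lam1 = k * (k - 1) / (n - 1))
    (hnd : ¬ (n - 1) ∣ k * (k - 1))
    (B : Fin n → Finset (Fin n))
    (hsize : ∀ i, (B i).card = k)
    (hrep : ∀ s : Fin n, (Finset.univ.filter fun i => s ∈ B i).card = k)
    (hint : ∀ i j : Fin n, i ≠ j →
      (B i ∩ B j).card = lam1 ∨ (B i ∩ B j).card = lam1 + 1)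
    (hn1 : ∀ i : Fin n,
      (Finset.univ.filter fun j : Fin n => j ≠ i ∧ (B i ∩ B j).card = lam1).card
        = (lam1 + 1) * (n - 1) - k * (k - 1)) :
    ∀ p q : Fin n, p ≠ q →
      (Finset.univ.filter fun i => p ∈ B i ∧ q ∈ B i).card = lam1 ∨
      (Finset.univ.filter fun i => p ∈ B i ∧ q ∈ B i).card = lam1 + 1 := by
  classical
  set L : ℤ := (lam1 : ℤ) with hLdef
  -- indicator function
  set ind : Fin n → Fin n → ℤ := fun i s => if s ∈ B i then 1 else 0 with hinddef
  -- covering numbers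
  set m : Fin n → Fin n → ℤ :=
    fun s t => ((Finset.univ.filter fun i => s ∈ B i ∧ t ∈ B i).card : ℤ) with hmdef
  -- basic cast facts
  have hMcast : ((n - 1 : ℕ) : ℤ) = (n : ℤ) - 1 := by
    rw [Nat.cast_sub (by omega : 1 ≤ n)]; simp
  have hKcast : ((k * (k - 1) : ℕ) : ℤ) = (k : ℤ) * ((k : ℤ) - 1) := by
    rw [Nat.cast_mul, Nat.cast_sub hk]; simp
  -- k(k-1) < (lam1+1)(n-1)
  have hMpos : 0 < n - 1 := by omega
  have hlt : k * (k - 1) < (lam1 + 1) * (n - 1) := by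
    have hdm := Nat.div_add_mod (k * (k - 1)) (n - 1)
    have hmod : k * (k - 1) % (n - 1) < n - 1 := Nat.mod_lt _ hMpos
    calc k * (k - 1) = (n - 1) * (k * (k - 1) / (n - 1)) + k * (k - 1) % (n - 1) :=
          hdm.symm
      _ < (n - 1) * (k * (k - 1) / (n - 1)) + (n - 1) := by omega
      _ = (k * (k - 1) / (n - 1) + 1) * (n - 1) := by ring
      _ = (lam1 + 1) * (n - 1) := by rw [hlam1]
  -- intersection card as a sum of indicator products
  have hc : ∀ i j : Fin n, ((B i ∩ B j).card : ℤ) = ∑ s : Fin n, ind i s * ind j s := by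
    intro i j
    have : B i ∩ B j = Finset.univ.filter fun s => s ∈ B i ∧ s ∈ B j := by
      ext s; simp [Finset.mem_inter]
    rw [this, Finset.card_filter]
    push_cast
    refine Finset.sum_congr rfl fun s _ => ?_
    simp only [hinddef]
    split_ifs with h1 h2 h3 <;> simp_all
  -- covering number as a sum of indicator products
  have hm : ∀ s t : Fin n, m s t = ∑ i : Fin n, ind i s * ind i t := by
    intro s t
    simp only [hmdef]
    rw [Finset.card_filter]
    push_cast
    refine Finset.sum_congr rfl fun i _ => ?_
    simp only [hinddef]
    split_ifs with h1 h2 h3 <;> simp_all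
  -- row sums of the indicator
  have hrow : ∀ i : Fin n, ∑ s : Fin n, ind i s = (k : ℤ) := by
    intro i
    simp only [hinddef]
    rw [Finset.sum_ite_mem, Finset.univ_inter, Finset.sum_const, hsize i]
    simp
  -- column sums of the indicator
  have hcol : ∀ s : Fin n, ∑ i : Fin n, ind i s = (k : ℤ) := by
    intro s
    simp only [hinddef]
    rw [Finset.sum_boole, hrep s]
  -- diagonal covering numbers
  have hmdiag : ∀ s : Fin n, m s s = (k : ℤ) := by
    intro s
    rw [hm, ← hcol s]
    refine Finset.sum_congr rfl fun i _ => ?_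
    simp only [hinddef]
    split_ifs <;> simp
  -- first double-counting identity: total sum of covering numbers
  have E1 : ∑ s : Fin n, ∑ t : Fin n, m s t = (n : ℤ) * (k : ℤ) ^ 2 := by
    calc ∑ s : Fin n, ∑ t : Fin n, m s t
        = ∑ s : Fin n, ∑ t : Fin n, ∑ i : Fin n, ind i s * ind i t :=
          Finset.sum_congr rfl fun s _ => Finset.sum_congr rfl fun t _ => hm s t
      _ = ∑ s : Fin n, ∑ i : Fin n, ∑ t : Fin n, ind i s * ind i t :=
          Finset.sum_congr rfl fun s _ => Finset.sum_comm
      _ = ∑ i : Fin n, ∑ s : Fin n, ∑ t : Fin n, ind i s * ind i t := Finset.sum_comm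
      _ = ∑ i : Fin n, (∑ s : Fin n, ind i s) * (∑ t : Fin n, ind i t) :=
          Finset.sum_congr rfl fun i _ => (Finset.sum_mul_sum _ _ _ _).symm
      _ = ∑ _i : Fin n, (k : ℤ) * (k : ℤ) := by
          refine Finset.sum_congr rfl fun i _ => ?_
          rw [hrow i]
      _ = (n : ℤ) * (k : ℤ) ^ 2 := by
          rw [Finset.sum_const, Finset.card_univ, Fintype.card_fin]
          push_cast; ring
  -- second double-counting identity (Tsuji): sum of squares
  have E2 : ∑ s : Fin n, ∑ t : Fin n, m s t ^ 2
      = ∑ i : Fin n, ∑ j : Fin n, ((B i ∩ B j).card : ℤ) ^ 2 := by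
    calc ∑ s : Fin n, ∑ t : Fin n, m s t ^ 2
        = ∑ s : Fin n, ∑ t : Fin n, ∑ i : Fin n, ∑ j : Fin n,
            (ind i s * ind i t) * (ind j s * ind j t) := by
          refine Finset.sum_congr rfl fun s _ => Finset.sum_congr rfl fun t _ => ?_
          rw [hm, sq, Finset.sum_mul_sum]
      _ = ∑ i : Fin n, ∑ j : Fin n, ∑ s : Fin n, ∑ t : Fin n,
            (ind i s * ind i t) * (ind j s * ind j t) := sum_swap4 _
      _ = ∑ i : Fin n, ∑ j : Fin n, ((B i ∩ B j).card : ℤ) ^ 2 := by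
          refine Finset.sum_congr rfl fun i _ => Finset.sum_congr rfl fun j _ => ?_
          rw [sq, hc, Finset.sum_mul_sum]
          exact Finset.sum_congr rfl fun s _ => Finset.sum_congr rfl fun t _ => by ring
  -- the filtered counts restated on erase sets
  have hn1' : ∀ i : Fin n,
      (((Finset.univ.erase i).filter fun j => (B i ∩ B j).card = lam1).card : ℤ)
        = (L + 1) * ((n : ℤ) - 1) - (k : ℤ) * ((k : ℤ) - 1) := by
    intro i
    have hset : ((Finset.univ.erase i).filter fun j => (B i ∩ B j).card = lam1)
        = Finset.univ.filter fun j : Fin n => j ≠ i ∧ (B i ∩ B j).card = lam1 := by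
      ext j
      simp only [Finset.mem_filter, Finset.mem_erase, Finset.mem_univ, true_and, and_true]
    rw [hset, hn1 i, Nat.cast_sub hlt.le, hKcast, Nat.cast_mul, hMcast]
    push_cast [hLdef]
    ring
  -- linear row sums of intersection numbers
  have hrowlin : ∀ i : Fin n, ∑ j ∈ Finset.univ.erase i, ((B i ∩ B j).card : ℤ)
      = (k : ℤ) * ((k : ℤ) - 1) := by
    intro i
    have step : ∀ j ∈ Finset.univ.erase i, ((B i ∩ B j).card : ℤ)
        = (L + 1) - (if (B i ∩ B j).card = lam1 then (1 : ℤ) else 0) := by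
      intro j hj
      have hij : i ≠ j := (Finset.mem_erase.mp hj).1.symm
      rcases hint i j hij with h | h <;> rw [h] <;> simp [hLdef, h]
    rw [Finset.sum_congr rfl step, Finset.sum_sub_distrib, Finset.sum_const,
      Finset.sum_boole, hn1' i, Finset.card_erase_of_mem (Finset.mem_univ i),
      Finset.card_univ, Fintype.card_fin]
    rw [nsmul_eq_mul, hMcast]
    ring
  -- quadratic row sums of intersection numbers
  have hrowsq : ∀ i : Fin n, ∑ j ∈ Finset.univ.erase i, ((B i ∩ B j).card : ℤ) ^ 2
      = (2 * L + 1) * ((k : ℤ) * ((k : ℤ) - 1)) - L * (L + 1) * ((n : ℤ) - 1) := by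
    intro i
    have step : ∀ j ∈ Finset.univ.erase i, ((B i ∩ B j).card : ℤ) ^ 2
        = (2 * L + 1) * ((B i ∩ B j).card : ℤ) - L * (L + 1) := by
      intro j hj
      have hij : i ≠ j := (Finset.mem_erase.mp hj).1.symm
      rcases hint i j hij with h | h <;> rw [h] <;> push_cast [hLdef] <;> ring
    rw [Finset.sum_congr rfl step, Finset.sum_sub_distrib, ← Finset.mul_sum, hrowlin i,
      Finset.sum_const, Finset.card_erase_of_mem (Finset.mem_univ i),
      Finset.card_univ, Fintype.card_fin, nsmul_eq_mul, hMcast]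
    ring
  -- full double sum of squared intersection numbers
  have hdouble : ∑ i : Fin n, ∑ j : Fin n, ((B i ∩ B j).card : ℤ) ^ 2
      = (n : ℤ) * ((k : ℤ) ^ 2 + (2 * L + 1) * ((k : ℤ) * ((k : ℤ) - 1))
          - L * (L + 1) * ((n : ℤ) - 1)) := by
    have hper : ∀ i : Fin n, ∑ j : Fin n, ((B i ∩ B j).card : ℤ) ^ 2
        = (k : ℤ) ^ 2 + ((2 * L + 1) * ((k : ℤ) * ((k : ℤ) - 1))
            - L * (L + 1) * ((n : ℤ) - 1)) := by
      intro i
      rw [← Finset.add_sum_erase _ _ (Finset.mem_univ i), Finset.inter_self, hsize i,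
        hrowsq i]
    rw [Finset.sum_congr rfl fun i _ => hper i, Finset.sum_const, Finset.card_univ,
      Fintype.card_fin, nsmul_eq_mul]
    ring
  -- the nonnegative quadratic form
  set g : Fin n → Fin n → ℤ := fun s t => (m s t - L) * (m s t - L - 1) with hgdef
  have gnonneg : ∀ s t : Fin n, 0 ≤ g s t := by
    intro s t
    exact consec_mul_nonneg (m s t - L)
  -- sum of g over all ordered pairs
  have hCall : ∑ s : Fin n, ∑ t : Fin n, g s t
      = (∑ s : Fin n, ∑ t : Fin n, m s t ^ 2)
        - (2 * L + 1) * (∑ s : Fin n, ∑ t : Fin n, m s t)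
        + L * (L + 1) * ((n : ℤ) * (n : ℤ)) := by
    have expand : ∀ s t : Fin n, g s t = m s t ^ 2 - (2 * L + 1) * m s t + L * (L + 1) := by
      intro s t; simp only [hgdef]; ring
    rw [Finset.sum_congr rfl fun s _ => Finset.sum_congr rfl fun t _ => expand s t]
    simp only [Finset.sum_add_distrib, Finset.sum_sub_distrib, ← Finset.mul_sum,
      Finset.sum_const, Finset.card_univ, Fintype.card_fin, nsmul_eq_mul]
    ring
  -- diagonal sum of g
  have hDiag : ∑ s : Fin n, g s s = (n : ℤ) * (((k : ℤ) - L) * ((k : ℤ) - L - 1)) := by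
    have : ∀ s : Fin n, g s s = ((k : ℤ) - L) * ((k : ℤ) - L - 1) := by
      intro s; simp only [hgdef, hmdiag s]
    rw [Finset.sum_congr rfl fun s _ => this s, Finset.sum_const, Finset.card_univ,
      Fintype.card_fin, nsmul_eq_mul]
  -- the off-diagonal sum of g vanishes
  have hgzero : ∑ s : Fin n, ∑ t ∈ Finset.univ.erase s, g s t = 0 := by
    have hsplit : ∑ s : Fin n, ∑ t : Fin n, g s t
        = (∑ s : Fin n, g s s) + ∑ s : Fin n, ∑ t ∈ Finset.univ.erase s, g s t := by
      rw [← Finset.sum_add_distrib]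
      exact Finset.sum_congr rfl fun s _ =>
        (Finset.add_sum_erase _ _ (Finset.mem_univ s)).symm
    have hval : ∑ s : Fin n, ∑ t : Fin n, g s t
        = (n : ℤ) * (((k : ℤ) - L) * ((k : ℤ) - L - 1)) := by
      rw [hCall, E2, hdouble, E1]
      ring
    rw [hval, hDiag] at hsplit
    linarith
  -- conclude termwise vanishing
  have hall : ∀ s ∈ (Finset.univ : Finset (Fin n)),
      ∑ t ∈ Finset.univ.erase s, g s t = 0 :=
    (Finset.sum_eq_zero_iff_of_nonneg fun s _ =>
      Finset.sum_nonneg fun t _ => gnonneg s t).mp hgzero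
  intro p q hpq
  have hq : q ∈ Finset.univ.erase p := Finset.mem_erase.mpr ⟨hpq.symm, Finset.mem_univ q⟩
  have hgpq : g p q = 0 :=
    (Finset.sum_eq_zero_iff_of_nonneg fun t _ => gnonneg p t).mp
      (hall p (Finset.mem_univ p)) q hq
  rcases mul_eq_zero.mp hgpq with h | h
  · left
    have hmL : m p q = L := by linarith
    have : ((Finset.univ.filter fun i => p ∈ B i ∧ q ∈ B i).card : ℤ) = (lam1 : ℤ) := hmL
    exact_mod_cast this
  · right
    have hmL : m p q = L + 1 := by linarith
    have : ((Finset.univ.filter fun i => p ∈ B i ∧ q ∈ B i).card : ℤ)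
        = ((lam1 + 1 : ℕ) : ℤ) := by push_cast; exact hmL
    exact_mod_cast this
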